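/- Let c₀>0, α∈[0,1), β=√(1−α²)>0, and let f:ℝ→ℂ be a solution of the profile ODE, with z=|f|². Then the limit z_∞ := lim_{s→+∞} z(s) exists; moreover z_∞ equals the limit as s→+∞ of the averages (1/s)∫₀^s z(σ)dσ. -/

import Mathlib

open Real Filter MeasureTheory

/-- Cesàro: if a continuous function tends to `L`, so do its averages. -/
lemma cesaro_integral {z : ℝ → ℝ} (hz : Continuous z) {L : ℝ}
    (h : Tendsto z atTop (nhds L)) :
    Tendsto (fun s : ℝ => (1 / s) * ∫ σ in (0:ℝ)..s, z σ) atTop (nhds L) := by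
  rw [Metric.tendsto_atTop]
  intro ε hε
  obtain ⟨s₀, hs₀⟩ := (Metric.tendsto_atTop.mp h) (ε/2) (by positivity)
  set s₁ : ℝ := max s₀ 1 with hs₁def
  have hs₁pos : (0:ℝ) < s₁ := lt_of_lt_of_le one_pos (le_max_right _ _)
  set A : ℝ := |∫ σ in (0:ℝ)..s₁, (z σ - L)| with hA
  have hA0 : 0 ≤ A := abs_nonneg _
  refine ⟨max s₁ (2*A/ε + 1), fun s hs => ?_⟩
  have hss₁ : s₁ ≤ s := le_trans (le_max_left _ _) hs
  have hsA : 2*A/ε + 1 ≤ s := le_trans (le_max_right _ _) hs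
  have hspos : 0 < s := lt_of_lt_of_le hs₁pos hss₁
  have hint : ∀ a b : ℝ, IntervalIntegrable (fun σ => z σ - L) volume a b :=
    fun a b => (hz.sub continuous_const).intervalIntegrable a b
  have key : (1 / s) * (∫ σ in (0:ℝ)..s, z σ) - L
      = (1 / s) * ∫ σ in (0:ℝ)..s, (z σ - L) := by
    rw [intervalIntegral.integral_sub (hz.intervalIntegrable 0 s)
      (intervalIntegrable_const)]
    rw [intervalIntegral.integral_const]
    field_simp
    rw [sub_zero, smul_eq_mul]
  have split : (∫ σ in (0:ℝ)..s, (z σ - L))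
      = (∫ σ in (0:ℝ)..s₁, (z σ - L)) + ∫ σ in s₁..s, (z σ - L) :=
    (intervalIntegral.integral_add_adjacent_intervals (hint 0 s₁) (hint s₁ s)).symm
  have tail : |∫ σ in s₁..s, (z σ - L)| ≤ (ε/2) * |s - s₁| := by
    rw [← Real.norm_eq_abs]
    refine intervalIntegral.norm_integral_le_of_norm_le_const ?_
    intro x hx
    rw [Set.uIoc_of_le hss₁] at hx
    have : dist (z x) L < ε/2 := hs₀ x (le_trans (le_max_left _ _) hx.1.le)
    rw [Real.dist_eq] at this
    simpa using this.le
  rw [Real.dist_eq, key, split]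
  have habs : |(1 / s) * ((∫ σ in (0:ℝ)..s₁, (z σ - L)) + ∫ σ in s₁..s, (z σ - L))|
      ≤ (1/s) * (A + (ε/2) * s) := by
    rw [abs_mul]
    have h1 : |1/s| = 1/s := abs_of_pos (by positivity)
    rw [h1]
    have h2 : |(∫ σ in (0:ℝ)..s₁, (z σ - L)) + ∫ σ in s₁..s, (z σ - L)| ≤ A + (ε/2)*s := by
      refine le_trans (abs_add_le _ _) (add_le_add le_rfl (le_trans tail ?_))
      have : |s - s₁| = s - s₁ := abs_of_nonneg (by linarith)
      rw [this]
      nlinarith [hs₁pos, hε.le]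
    exact mul_le_mul_of_nonneg_left h2 (by positivity)
  refine lt_of_le_of_lt habs ?_
  rw [mul_add]
  have h3 : (1/s) * ((ε/2)*s) = ε/2 := by field_simp
  have h4 : (1/s) * A < ε/2 := by
    rw [div_mul_eq_mul_div, one_mul, div_lt_iff₀ hspos]
    have he : 2*A/ε*ε = 2*A := div_mul_cancel₀ _ hε.ne'
    nlinarith [mul_le_mul_of_nonneg_right hsA hε.le]
  linarith

lemma phi_deriv_eq (s a b Y H : ℝ) (hs : s ≠ 0) (hb : b ≠ 0) :
    -(2*a/b) * H - 4/(b*s^2) * H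
      = 2*Y + 4/b * (-(s/2) * (a*H + b*Y) * s⁻¹ + H * -(s^2)⁻¹) := by
  field_simp
  ring

lemma key_re (s a b Q1 Q2 : ℝ) (w v : ℂ) :
    ((starRingEnd ℂ) (-(((s:ℂ)/2) * ((a:ℂ) + (b:ℂ)*Complex.I) * v + (Q1:ℂ) * (Q2:ℂ) * w)) * v
      + (starRingEnd ℂ) v * (-(((s:ℂ)/2) * ((a:ℂ) + (b:ℂ)*Complex.I) * v + (Q1:ℂ) * (Q2:ℂ) * w))).re
    = -(a*s) * Complex.normSq v - 2*(Q1*Q2)*((starRingEnd ℂ) w * v).re := by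
  simp [Complex.ext_iff, Complex.mul_re, Complex.mul_im, Complex.normSq_apply,
    Complex.div_re, Complex.div_im]
  ring

lemma key_im (s a b Q1 Q2 : ℝ) (w v : ℂ) :
    ((starRingEnd ℂ) v * v
      + (starRingEnd ℂ) w * (-(((s:ℂ)/2) * ((a:ℂ) + (b:ℂ)*Complex.I) * v + (Q1:ℂ) * (Q2:ℂ) * w))).im
    = -(s/2) * (a * ((starRingEnd ℂ) w * v).im + b * ((starRingEnd ℂ) w * v).re) := by
  simp [Complex.ext_iff, Complex.mul_re, Complex.mul_im, Complex.normSq_apply,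
    Complex.div_re, Complex.div_im]
  ring

open intervalIntegral in
/-- The profile ODE `f'' + (s/2)(α+iβ) f' + (c₀²/4) e^{-αs²/2} f = 0`, with
`β = √(1-α²)`, encoded for a pair `(f, f')`. -/
def ProfileODE (c₀ α : ℝ) (f f' : ℝ → ℂ) : Prop :=
  ∀ s : ℝ,
    HasDerivAt f (f' s) s ∧
    HasDerivAt f'
      (-(((s : ℂ) / 2) * ((α : ℂ) + (Real.sqrt (1 - α ^ 2) : ℂ) * Complex.I) * f' s
        + ((c₀ ^ 2 / 4 : ℝ) : ℂ) * ((Real.exp (-α * s ^ 2 / 2) : ℝ) : ℂ) * f s)) s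

open intervalIntegral in
/-- For `α ∈ [0,1)` the limit `z_∞ = lim_{s→∞} |f(s)|²`
exists, and it also equals the limit of the averages `(1/s)∫₀ˢ |f|²`. -/
theorem profileODE_z_limit (c₀ α : ℝ) (hc₀ : 0 < c₀)
    (hα : α ∈ Set.Ico (0 : ℝ) 1)
    (f f' : ℝ → ℂ) (h : ProfileODE c₀ α f f') :
    ∃ L : ℝ,
      Tendsto (fun s : ℝ => ‖f s‖ ^ 2) atTop (nhds L) ∧
      Tendsto (fun s : ℝ => (1 / s) * ∫ σ in (0 : ℝ)..s, ‖f σ‖ ^ 2)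
        atTop (nhds L) := by
  obtain ⟨hα0, hα1⟩ := hα
  have hβpos : 0 < Real.sqrt (1 - α^2) := Real.sqrt_pos.mpr (by nlinarith)
  set β : ℝ := Real.sqrt (1 - α^2) with hβdef
  have hf : ∀ s, HasDerivAt f (f' s) s := fun s => (h s).1
  set q : ℝ → ℝ := fun s => c₀^2/4 * Real.exp (-α*s^2/2) with hqdef
  have hqpos : ∀ s, 0 < q s := fun s => by positivity
  set F : ℝ → ℂ := fun s => -(((s : ℂ) / 2) * ((α : ℂ) + (β : ℂ) * Complex.I) * f' s
        + ((c₀ ^ 2 / 4 : ℝ) : ℂ) * ((Real.exp (-α * s ^ 2 / 2) : ℝ) : ℂ) * f s) with hFdef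
  have hf' : ∀ s, HasDerivAt f' (F s) s := by
    intro s
    have := (h s).2
    rw [show Real.sqrt (1 - α ^ 2) = β from rfl] at this
    exact this
  set z : ℝ → ℝ := fun s => Complex.normSq (f s) with hzdef
  set y : ℝ → ℝ := fun s => ((starRingEnd ℂ) (f s) * f' s).re with hydef
  set hh : ℝ → ℝ := fun s => ((starRingEnd ℂ) (f s) * f' s).im with hhdef
  have hznn : ∀ s, 0 ≤ z s := fun s => Complex.normSq_nonneg _
  -- derivative of z
  have hz' : ∀ s, HasDerivAt z (2 * y s) s := by
    intro s
    have h1 : HasDerivAt (fun t => (starRingEnd ℂ) (f t) * f t)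
        ((starRingEnd ℂ) (f' s) * f s + (starRingEnd ℂ) (f s) * f' s) s :=
      ((hf s).star).mul (hf s)
    have h2 := Complex.reCLM.hasFDerivAt.comp_hasDerivAt s h1
    have hfun : z = fun t => ((starRingEnd ℂ) (f t) * f t).re := by
      funext t
      simp [hzdef, Complex.normSq_apply, Complex.mul_re]
    rw [hfun]
    refine h2.congr_deriv (Eq.symm ?_)
    simp [hydef, Complex.add_re, Complex.mul_re]
    ring
  -- derivative of y and hh
  have hu : ∀ s, HasDerivAt (fun t => (starRingEnd ℂ) (f t) * f' t)
      ((starRingEnd ℂ) (f' s) * f' s + (starRingEnd ℂ) (f s) * F s) s :=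
    fun s => ((hf s).star).mul (hf' s)
  have hy' : ∀ s, HasDerivAt y
      (((starRingEnd ℂ) (f' s) * f' s + (starRingEnd ℂ) (f s) * F s).re) s :=
    fun s => Complex.reCLM.hasFDerivAt.comp_hasDerivAt s (hu s)
  have hhderiv : ∀ s, HasDerivAt hh (-(s/2) * (α * hh s + β * y s)) s := by
    intro s
    have h2 := Complex.imCLM.hasFDerivAt.comp_hasDerivAt s (hu s)
    have hkey := key_im s α β (c₀^2/4) (Real.exp (-α*s^2/2)) (f s) (f' s)
    refine h2.congr_deriv (Eq.symm ?_)
    simp only [Complex.imCLM_apply, Function.comp]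
    rw [show F s = -(((s:ℂ)/2) * ((α:ℂ) + (β:ℂ)*Complex.I) * f' s
      + ((c₀^2/4 : ℝ):ℂ) * ((Real.exp (-α*s^2/2) : ℝ):ℂ) * f s) from rfl, hkey]
  -- energy
  set E : ℝ → ℝ := fun s => Complex.normSq (f' s) + q s * z s with hEdef
  have hq' : ∀ s, HasDerivAt q (-(α*s) * q s) s := by
    intro s
    have hg : HasDerivAt (fun t : ℝ => -α*t^2/2) (-(α*s)) s := by
      have := ((hasDerivAt_pow 2 s).const_mul (-α)).div_const 2
      refine this.congr_deriv (Eq.symm ?_)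
      ring
    have := ((Real.hasDerivAt_exp (-α*s^2/2)).comp s hg).const_mul (c₀^2/4)
    refine this.congr_deriv (Eq.symm ?_)
    ring
  have hE' : ∀ s, HasDerivAt E (-(α*s) * E s) s := by
    intro s
    have h1 : HasDerivAt (fun t => (starRingEnd ℂ) (f' t) * f' t)
        ((starRingEnd ℂ) (F s) * f' s + (starRingEnd ℂ) (f' s) * F s) s :=
      ((hf' s).star).mul (hf' s)
    have h2 := Complex.reCLM.hasFDerivAt.comp_hasDerivAt s h1
    have h3 := ((hq' s).mul (hz' s))
    have h4 := (h2.add h3)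
    have hfun : E = fun t => ((starRingEnd ℂ) (f' t) * f' t).re + q t * z t := by
      funext t
      simp [hEdef, Complex.normSq_apply, Complex.mul_re]
    rw [hfun]
    refine h4.congr_deriv (Eq.symm ?_)
    have hkey := key_re s α β (c₀^2/4) (Real.exp (-α*s^2/2)) (f s) (f' s)
    simp only [Complex.reCLM_apply, Function.comp]
    rw [show F s = -(((s:ℂ)/2) * ((α:ℂ) + (β:ℂ)*Complex.I) * f' s
      + ((c₀^2/4 : ℝ):ℂ) * ((Real.exp (-α*s^2/2) : ℝ):ℂ) * f s) from rfl, hkey]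
    rw [show ((starRingEnd ℂ) (f s) * f' s).re = y s from rfl,
      show Complex.normSq (f' s) = E s - q s * z s by rw [hEdef]; ring,
      show (c₀^2/4) * Real.exp (-α*s^2/2) = q s from rfl,
      show ((starRingEnd ℂ) (f' s) * f' s).re = Complex.normSq (f' s) by
        simp [Complex.mul_re, Complex.normSq_apply]]
    ring
  -- explicit solution for E
  have hEsol : ∀ s, E s = E 0 * Real.exp (-α*s^2/2) := by
    have hG : ∀ s, HasDerivAt (fun t => E t * Real.exp (α*t^2/2)) 0 s := by
      intro s
      have hg : HasDerivAt (fun t : ℝ => α*t^2/2) (α*s) s := by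
        have := ((hasDerivAt_pow 2 s).const_mul α).div_const 2
        refine this.congr_deriv (Eq.symm ?_)
        ring
      have hexp := (Real.hasDerivAt_exp (α*s^2/2)).comp s hg
      have hmul := (hE' s).mul hexp
      simp only [Function.comp] at hmul
      refine hmul.congr_deriv (Eq.symm ?_)
      ring
    have hconst := is_const_of_deriv_eq_zero (f := fun t => E t * Real.exp (α*t^2/2))
      (fun x => (hG x).differentiableAt) (fun x => (hG x).deriv)
    intro s
    have h0 := hconst s 0
    rw [show α*(0:ℝ)^2/2 = 0 by ring, Real.exp_zero, mul_one] at h0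
    have h1 : E s * Real.exp (α*s^2/2) * Real.exp (-α*s^2/2)
        = E 0 * Real.exp (-α*s^2/2) := by rw [h0]
    rwa [mul_assoc, ← Real.exp_add, show α*s^2/2 + -α*s^2/2 = 0 by ring,
      Real.exp_zero, mul_one] at h1
  have hE0nn : 0 ≤ E 0 := by
    have : E 0 = Complex.normSq (f' 0) + q 0 * z 0 := rfl
    rw [this]
    exact add_nonneg (Complex.normSq_nonneg _) (mul_nonneg (hqpos 0).le (hznn 0))
  set M : ℝ := 4 * E 0 / c₀^2 with hMdef
  have hMnn : 0 ≤ M := by positivity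
  have hzM : ∀ s, z s ≤ M := by
    intro s
    have h1 : q s * z s ≤ E s := by
      have he : E s = Complex.normSq (f' s) + q s * z s := rfl
      nlinarith [Complex.normSq_nonneg (f' s)]
    rw [hEsol s] at h1
    have hqs : q s = c₀^2/4 * Real.exp (-α*s^2/2) := rfl
    rw [hqs] at h1
    have hexp := Real.exp_pos (-α*s^2/2)
    have h1'' : (c₀^2/4 * z s) * Real.exp (-α*s^2/2) ≤ E 0 * Real.exp (-α*s^2/2) := by
      rw [show (c₀^2/4 * z s) * Real.exp (-α*s^2/2)
        = c₀^2/4 * Real.exp (-α*s^2/2) * z s by ring]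
      exact h1
    have h2 := le_of_mul_le_mul_right h1'' hexp
    calc z s = 4/c₀^2 * (c₀^2/4 * z s) := by field_simp
      _ ≤ 4/c₀^2 * E 0 := mul_le_mul_of_nonneg_left h2 (by positivity)
      _ = M := by rw [hMdef]; ring
  have hf'bd : ∀ s, Complex.normSq (f' s) ≤ E 0 * Real.exp (-α*s^2/2) := by
    intro s
    have h1 : Complex.normSq (f' s) ≤ E s := by
      have he : E s = Complex.normSq (f' s) + q s * z s := rfl
      nlinarith [mul_nonneg (hqpos s).le (hznn s)]
    rwa [hEsol s] at h1
  set C : ℝ := Real.sqrt M * Real.sqrt (E 0) with hCdef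
  have hCnn : 0 ≤ C := mul_nonneg (Real.sqrt_nonneg _) (Real.sqrt_nonneg _)
  have hhbd : ∀ s, |hh s| ≤ C * Real.exp (-α*s^2/4) := by
    intro s
    have h1 : |hh s| ≤ ‖(starRingEnd ℂ) (f s) * f' s‖ := Complex.abs_im_le_norm _
    rw [norm_mul, Complex.norm_conj] at h1
    have h2 : ‖f s‖ ≤ Real.sqrt M := by
      rw [Complex.norm_def]
      exact Real.sqrt_le_sqrt (hzM s)
    have h3 : ‖f' s‖ ≤ Real.sqrt (E 0) * Real.exp (-α*s^2/4) := by
      rw [Complex.norm_def]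
      refine le_trans (Real.sqrt_le_sqrt (hf'bd s)) ?_
      rw [Real.sqrt_mul hE0nn, ← Real.exp_half, show -α*s^2/2/2 = -α*s^2/4 by ring]
    calc |hh s| ≤ ‖f s‖ * ‖f' s‖ := h1
      _ ≤ Real.sqrt M * (Real.sqrt (E 0) * Real.exp (-α*s^2/4)) := by
          apply mul_le_mul h2 h3 (norm_nonneg _) (Real.sqrt_nonneg _)
      _ = C * Real.exp (-α*s^2/4) := by rw [hCdef]; ring
  have hhbd1 : ∀ s, |hh s| ≤ C := by
    intro s
    refine le_trans (hhbd s) ?_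
    calc C * Real.exp (-α*s^2/4) ≤ C * 1 :=
          mul_le_mul_of_nonneg_left (Real.exp_le_one_iff.mpr (by nlinarith [sq_nonneg s])) hCnn
      _ = C := mul_one C
  -- continuity
  have hhcont : Continuous hh := by
    rw [continuous_iff_continuousAt]
    exact fun s => (hhderiv s).differentiableAt.continuousAt
  have hzcont : Continuous z := by
    rw [continuous_iff_continuousAt]
    exact fun s => (hz' s).differentiableAt.continuousAt
  -- the corrected function Φ
  set ψ : ℝ → ℝ := fun s => -(2*α/β) * hh s - 4/(β*s^2) * hh s with hψdef
  set Φ : ℝ → ℝ := fun t => z t + 4/β * (hh t * t⁻¹) with hΦdef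
  have hΦ' : ∀ s, 0 < s → HasDerivAt Φ (ψ s) s := by
    intro s hs
    have h1 := ((hhderiv s).mul (hasDerivAt_inv hs.ne')).const_mul (4/β)
    have h2 := (hz' s).add h1
    refine h2.congr_deriv (Eq.symm ?_)
    exact phi_deriv_eq s α β (y s) (hh s) hs.ne' hβpos.ne'
  -- ψ is integrable on (1,∞)
  have hψcont : ContinuousOn ψ (Set.Ici 1) := by
    have h1 : Continuous (fun s : ℝ => -(2*α/β) * hh s) := continuous_const.mul hhcont
    have h2 : ContinuousOn (fun s : ℝ => 4/(β*s^2) * hh s) (Set.Ici 1) := by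
      refine ContinuousOn.mul ?_ hhcont.continuousOn
      refine ContinuousOn.div continuousOn_const
        (continuous_const.mul (continuous_pow 2)).continuousOn ?_
      intro x hx
      have hx1 : (1:ℝ) ≤ x := hx
      positivity
    exact h1.continuousOn.sub h2
  have hψint : IntegrableOn ψ (Set.Ioi 1) := by
    have hg : IntegrableOn (fun s : ℝ => (2*α/β) * C * Real.exp (-(α/4)*s)
        + 4*C/β * (s^2)⁻¹) (Set.Ioi 1) := by
      apply Integrable.add
      · rcases eq_or_lt_of_le hα0 with hz0 | hpos
        · simp [← hz0]
        · exact ((exp_neg_integrableOn_Ioi 1 (by positivity : (0:ℝ) < α/4)).const_mul _)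
      · have h2 : IntegrableOn (fun s : ℝ => s ^ (-2 : ℝ)) (Set.Ioi 1) :=
          integrableOn_Ioi_rpow_of_lt (by norm_num) one_pos
        have h3 : IntegrableOn (fun s : ℝ => (s^2)⁻¹) (Set.Ioi 1) := by
          apply h2.congr_fun ?_ measurableSet_Ioi
          intro x hx
          have hx0 : 0 < x := lt_trans one_pos hx
          show x ^ (-2:ℝ) = (x^2)⁻¹
          rw [Real.rpow_neg hx0.le, show (2:ℝ) = ((2:ℕ):ℝ) by norm_num,
            Real.rpow_natCast]
        exact h3.const_mul _
    refine Integrable.mono' hg ?_ ?_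
    · exact ((hψcont.mono (Set.Ioi_subset_Ici le_rfl)).aestronglyMeasurable measurableSet_Ioi)
    · filter_upwards [ae_restrict_mem measurableSet_Ioi] with s hs
      have hs1 : (1:ℝ) < s := hs
      have hs0 : (0:ℝ) < s := lt_trans one_pos hs1
      have hb1 : |(-(2*α/β)) * hh s| ≤ (2*α/β) * C * Real.exp (-(α/4)*s) := by
        rw [abs_mul, abs_neg, abs_of_nonneg (by positivity : (0:ℝ) ≤ 2*α/β)]
        have he : Real.exp (-α*s^2/4) ≤ Real.exp (-(α/4)*s) := by
          apply Real.exp_le_exp.mpr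
          nlinarith [mul_nonneg hα0 (by nlinarith : (0:ℝ) ≤ s^2 - s)]
        have hC2 : |hh s| ≤ C * Real.exp (-(α/4)*s) :=
          le_trans (hhbd s) (mul_le_mul_of_nonneg_left he hCnn)
        calc 2*α/β * |hh s| ≤ 2*α/β * (C * Real.exp (-(α/4)*s)) :=
              mul_le_mul_of_nonneg_left hC2 (by positivity)
          _ = 2*α/β * C * Real.exp (-(α/4)*s) := by ring
      have hb2 : |4/(β*s^2) * hh s| ≤ 4*C/β * (s^2)⁻¹ := by
        rw [abs_mul, abs_of_nonneg (by positivity : (0:ℝ) ≤ 4/(β*s^2))]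
        calc 4/(β*s^2) * |hh s| ≤ 4/(β*s^2) * C := by
              apply mul_le_mul_of_nonneg_left (hhbd1 s) (by positivity)
          _ = 4*C/β * (s^2)⁻¹ := by field_simp
      calc ‖ψ s‖ = |(-(2*α/β)) * hh s - 4/(β*s^2) * hh s| := rfl
        _ ≤ |(-(2*α/β)) * hh s| + |4/(β*s^2) * hh s| := abs_sub _ _
        _ ≤ (2*α/β) * C * Real.exp (-(α/4)*s) + 4*C/β * (s^2)⁻¹ := add_le_add hb1 hb2
  -- fundamental theorem of calculus
  have hΦeq : ∀ s, 1 ≤ s → Φ s = Φ 1 + ∫ σ in (1:ℝ)..s, ψ σ := by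
    intro s hs
    have hsub : Set.uIcc (1:ℝ) s ⊆ Set.Ici 1 := by
      rw [Set.uIcc_of_le hs]; exact fun x hx => hx.1
    have hftc := intervalIntegral.integral_eq_sub_of_hasDerivAt
      (fun x hx => hΦ' x (lt_of_lt_of_le one_pos (hsub hx)))
      ((hψcont.mono hsub).intervalIntegrable)
    rw [hftc]; ring
  -- limit of the integral of ψ
  have hI := MeasureTheory.intervalIntegral_tendsto_integral_Ioi (a := 1) (f := ψ) (μ := volume)
    hψint (tendsto_id (α := ℝ) (x := atTop))
  set I : ℝ := ∫ σ in Set.Ioi (1:ℝ), ψ σ with hIdef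
  have hΦlim : Tendsto Φ atTop (nhds (Φ 1 + I)) := by
    have h1 : Tendsto (fun s => Φ 1 + ∫ σ in (1:ℝ)..s, ψ σ) atTop (nhds (Φ 1 + I)) :=
      hI.const_add (Φ 1)
    refine h1.congr' ?_
    filter_upwards [Ici_mem_atTop (1:ℝ)] with s hs
    exact (hΦeq s hs).symm
  have hsmall : Tendsto (fun s : ℝ => 4/β * (hh s * s⁻¹)) atTop (nhds 0) := by
    have hg : Tendsto (fun s : ℝ => 4/β*C * s⁻¹) atTop (nhds 0) := by
      simpa using tendsto_inv_atTop_zero.const_mul (4/β*C)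
    refine squeeze_zero_norm' ?_ hg
    filter_upwards [Ici_mem_atTop (1:ℝ)] with s hs
    have hs0 : (0:ℝ) < s := lt_of_lt_of_le one_pos hs
    rw [Real.norm_eq_abs, abs_mul, abs_mul, abs_inv, abs_of_pos hs0,
      abs_of_nonneg (by positivity : (0:ℝ) ≤ 4/β)]
    calc 4/β * (|hh s| * s⁻¹) ≤ 4/β * (C * s⁻¹) :=
          mul_le_mul_of_nonneg_left
            (mul_le_mul_of_nonneg_right (hhbd1 s) (by positivity)) (by positivity)
      _ = 4/β*C * s⁻¹ := by ring
  have hzlim : Tendsto z atTop (nhds (Φ 1 + I)) := by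
    have hsub := hΦlim.sub hsmall
    rw [sub_zero] at hsub
    refine hsub.congr ?_
    intro s
    show Φ s - 4/β * (hh s * s⁻¹) = z s
    rw [show Φ s = z s + 4/β * (hh s * s⁻¹) from rfl]
    ring
  refine ⟨Φ 1 + I, ?_, ?_⟩
  · have habs : (fun s : ℝ => ‖f s‖^2) = z := by
      funext s
      rw [Complex.sq_norm]
    rwa [habs]
  · have hfun : (fun s : ℝ => (1/s) * ∫ σ in (0:ℝ)..s, ‖f σ‖^2)
        = fun s : ℝ => (1/s) * ∫ σ in (0:ℝ)..s, z σ := by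
      funext s
      congr 1
      refine intervalIntegral.integral_congr ?_
      intro σ _
      show ‖f σ‖^2 = z σ
      rw [Complex.sq_norm]
    rw [hfun]
    exact cesaro_integral hzcont hzlim
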